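/- arXiv:1007.2678 — 6 statements merged into one kernel-verified Lean document; each statement's English description precedes it below -/
import Mathlib

section
/- Let G = (V1 ∪ V2, E) be a bipartite graph with |V1| = |V2| = t. G has a perfect matching if and only if the polynomial F(G) = ∏_{i=1}^t (Σ_{(v_i,u_j)∈E} x_i y_j) contains the multilinear monomial x_1...x_t y_1...y_t with nonzero coefficient in its sum-product expansion. -/
open MvPolynomial

lemma aux_exp_eq (t : ℕ) (g : Fin t → Fin t) :
    ((∑ i : Fin t, (Finsupp.single (Sum.inl i) 1 + Finsupp.single (Sum.inr (g i)) 1))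
      : (Fin t ⊕ Fin t) →₀ ℕ) = ∑ v : Fin t ⊕ Fin t, Finsupp.single v 1 ↔
    Function.Bijective g := by
  rw [Fintype.sum_sum_type, Finset.sum_add_distrib, add_right_inj]
  constructor
  · intro h
    rw [Fintype.bijective_iff_injective_and_card]
    refine ⟨fun a b hab => ?_, rfl⟩
    have h1 := DFunLike.congr_fun h (Sum.inr (g a))
    simp only [Finsupp.finset_sum_apply, Finsupp.single_apply, Sum.inr.injEq] at h1
    rw [Finset.sum_ite_eq' Finset.univ, if_pos (Finset.mem_univ _)] at h1
    rw [Finset.sum_boole, Nat.cast_id] at h1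
    have := Finset.card_le_one.mp (le_of_eq h1) a (by simp) b (by simp [hab])
    exact this
  · intro hg
    exact hg.sum_comp fun j => Finsupp.single (Sum.inr j) 1

/-- A bipartite graph `G` with parts of size `t` has a perfect matching iff the
polynomial `F(G) = ∏ i, (∑_{(v_i,u_j) ∈ E} x_i y_j)` contains the multilinear
monomial `x_1 ⋯ x_t y_1 ⋯ y_t` with nonzero coefficient. -/
theorem perfect_matching_iff_coeff_ne_zero (t : ℕ) (E : Fin t → Fin t → Prop) [DecidableRel E] :
    (∃ σ : Equiv.Perm (Fin t), ∀ i, E i (σ i)) ↔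
      MvPolynomial.coeff (∑ v : Fin t ⊕ Fin t, Finsupp.single v 1)
        (∏ i : Fin t, ∑ j ∈ Finset.univ.filter (fun j => E i j),
          (X (Sum.inl i) * X (Sum.inr j) : MvPolynomial (Fin t ⊕ Fin t) ℤ)) ≠ 0 := by
  rw [Finset.prod_univ_sum]
  have hmono : ∀ g : Fin t → Fin t,
      (∏ i, (X (Sum.inl i) * X (Sum.inr (g i)) : MvPolynomial (Fin t ⊕ Fin t) ℤ)) =
        monomial (∑ i : Fin t, (Finsupp.single (Sum.inl i) 1 + Finsupp.single (Sum.inr (g i)) 1)) 1 := by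
    intro g
    rw [monomial_sum_one]
    exact Finset.prod_congr rfl fun i _ => by rw [X, X, monomial_mul, one_mul]
  simp only [hmono, MvPolynomial.coeff_sum, MvPolynomial.coeff_monomial]
  rw [Finset.sum_boole]
  rw [Ne, Nat.cast_eq_zero, Finset.card_eq_zero, ← Ne, ← Finset.nonempty_iff_ne_empty]
  constructor
  · rintro ⟨σ, hσ⟩
    refine ⟨σ, Finset.mem_filter.mpr ⟨?_, (aux_exp_eq t σ).mpr σ.bijective⟩⟩
    exact Fintype.mem_piFinset.mpr fun i => Finset.mem_filter.mpr ⟨Finset.mem_univ _, hσ i⟩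
  · rintro ⟨g, hg⟩
    rw [Finset.mem_filter, Fintype.mem_piFinset] at hg
    obtain ⟨hmem, heq⟩ := hg
    exact ⟨Equiv.ofBijective g ((aux_exp_eq t g).mp heq),
      fun i => (Finset.mem_filter.mp (hmem i)).2⟩
end

section
/- Let F be a polynomial in n variables over ℤ that is a product of m linear forms with nonnegative coefficients (a Π_m Σ polynomial), with m ≤ n, and let H = x_1 + ... + x_n. Then the coefficient of the monomial x_1 x_2 ... x_n in F * H^{n-m} equals S(F) * (n-m)!, where S(F) is the sum of the coefficients of all multilinear monomials of degree m in F. -/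
open MvPolynomial

/-- The coefficient of a squarefree monomial of total degree `k` in `(∑ X j)^k` is `k!`. -/
lemma coeff_H_pow {n : ℕ} : ∀ (k : ℕ) (e : Fin n →₀ ℕ), (∀ j, e j ≤ 1) →
    (∑ j, e j) = k →
    MvPolynomial.coeff e ((∑ j : Fin n, X j : MvPolynomial (Fin n) ℤ) ^ k)
      = (k.factorial : ℤ) := by
  intro k
  induction k with
  | zero =>
    intro e he hsum
    have : e = 0 := by
      ext j
      have := Finset.sum_eq_zero_iff.mp hsum j (Finset.mem_univ j)
      simpa using this
    subst this
    simp
  | succ k ih =>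
    intro e he hsum
    rw [pow_succ, Finset.mul_sum, coeff_sum]
    have hcard : e.support.card = k + 1 := by
      rw [← hsum, Finset.card_eq_sum_ones]
      rw [← Finset.sum_subset (Finset.subset_univ e.support)
        (fun x _ hx => Finsupp.notMem_support_iff.mp hx)]
      exact Finset.sum_congr rfl fun x hx => by
        have h1 := he x
        have h2 := Finsupp.mem_support_iff.mp hx
        omega
    have key : ∀ j : Fin n,
        MvPolynomial.coeff e ((∑ j : Fin n, X j : MvPolynomial (Fin n) ℤ) ^ k * X j)
          = if j ∈ e.support then (k.factorial : ℤ) else 0 := by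
      intro j
      rw [coeff_mul_X']
      split_ifs with hj
      · have hj1 : e j = 1 := by
          have := Finsupp.mem_support_iff.mp hj; have := he j; omega
        apply ih
        · intro i
          rw [Finsupp.tsub_apply]
          rcases eq_or_ne i j with rfl | hij
          · have := he i; omega
          · simp [Finsupp.single_apply, hij.symm]; exact he i
        · have step1 : (∑ i, ((e - Finsupp.single j 1 : Fin n →₀ ℕ)) i)
              = ∑ i, (e i - Finsupp.single j 1 i) :=
            Finset.sum_congr rfl fun i _ => Finsupp.tsub_apply e _ i
          rw [step1]
          have hle : ∀ i ∈ (Finset.univ : Finset (Fin n)),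
              Finsupp.single j 1 i ≤ e i := by
            intro i _
            rcases eq_or_ne i j with rfl | hij
            · simp [hj1]
            · simp [Finsupp.single_apply, hij.symm]
          rw [Finset.sum_tsub_distrib Finset.univ hle, hsum]
          have : (∑ i, Finsupp.single j 1 i) = 1 := by
            rw [Finset.sum_eq_single j]
            · simp
            · intro b _ hb; simp [Finsupp.single_apply, hb.symm]
            · intro h; exact absurd (Finset.mem_univ j) h
          rw [this]
          omega
      · rfl
    rw [Finset.sum_congr rfl fun j _ => key j]
    have h2 : (Finset.univ : Finset (Fin n)).filter (fun x => x ∈ e.support)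
        = e.support := by
      ext x; simp
    rw [Finset.sum_ite, Finset.sum_const, Finset.sum_const, h2, hcard]
    push_cast [Nat.factorial_succ]
    ring

/-- Let `F = ∏_{i<m} (∑_j a_{ij} x_j)` be a product of `m` linear forms with
nonnegative coefficients in `n` variables, `m ≤ n`, and `H = x_1 + ⋯ + x_n`.
Then the coefficient of `x_1 ⋯ x_n` in `F * H^(n-m)` equals `S(F) * (n-m)!`,
where `S(F)` is the sum of the coefficients of all multilinear monomials of `F`. -/
theorem coeff_mul_pow_H_eq_S_mul_factorial (n m : ℕ) (hmn : m ≤ n)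
    (a : Fin m → Fin n → ℕ) :
    let F : MvPolynomial (Fin n) ℤ := ∏ i : Fin m, ∑ j : Fin n, C (a i j : ℤ) * X j
    let H : MvPolynomial (Fin n) ℤ := ∑ j : Fin n, X j
    MvPolynomial.coeff (∑ j : Fin n, Finsupp.single j 1) (F * H ^ (n - m))
      = (∑ d ∈ F.support.filter (fun d => ∀ j, d j ≤ 1), MvPolynomial.coeff d F)
          * ((n - m).factorial : ℤ) := by
  intro F H
  classical
  set u : Fin n →₀ ℕ := ∑ j : Fin n, Finsupp.single j 1 with hu
  have hu1 : ∀ j, u j = 1 := by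
    intro j
    rw [hu, Finsupp.finset_sum_apply, Finset.sum_eq_single j]
    · simp
    · intro b _ hb; simp [Finsupp.single_apply, hb]
    · intro h; exact absurd (Finset.mem_univ j) h
  have husum : (∑ j, u j) = n := by
    simp [hu1]
  have hFhom : F.IsHomogeneous m := by
    have := MvPolynomial.IsHomogeneous.prod Finset.univ
      (fun i : Fin m => ∑ j : Fin n, C (a i j : ℤ) * X j) (fun _ => 1)
      (fun i _ => MvPolynomial.IsHomogeneous.sum Finset.univ _ 1
        (fun j _ => MvPolynomial.isHomogeneous_C_mul_X _ _))
    simpa [F] using this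
  -- total degree of support elements
  have hdeg : ∀ d : Fin n →₀ ℕ, d ∈ F.support → (∑ j, d j) = m := by
    intro d hd
    have hd' : MvPolynomial.coeff d F ≠ 0 := MvPolynomial.mem_support_iff.mp hd
    have hdegm : d.degree = m := by
      by_contra h
      exact hd' (hFhom.coeff_eq_zero h)
    rw [← hdegm, Finsupp.degree]
    exact (Finset.sum_subset (Finset.subset_univ _)
      (fun x _ hx => Finsupp.notMem_support_iff.mp hx)).symm
  rw [MvPolynomial.coeff_mul]
  have h1 : ∑ p ∈ Finset.HasAntidiagonal.antidiagonal u,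
        MvPolynomial.coeff p.1 F * MvPolynomial.coeff p.2 (H ^ (n - m))
      = ∑ p ∈ (Finset.HasAntidiagonal.antidiagonal u).filter (fun p => p.1 ∈ F.support),
          MvPolynomial.coeff p.1 F * MvPolynomial.coeff p.2 (H ^ (n - m)) := by
    refine (Finset.sum_filter_of_ne ?_).symm
    intro p _ hne
    exact MvPolynomial.mem_support_iff.mpr fun h => hne (by rw [h, zero_mul])
  rw [h1]
  rw [Finset.sum_mul]
  refine Finset.sum_nbij' (fun p => p.1) (fun d => (d, u - d)) ?_ ?_ ?_ ?_ ?_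
  · intro p hp
    obtain ⟨hpa, hps⟩ := Finset.mem_filter.mp hp
    have hadd : p.1 + p.2 = u := Finset.HasAntidiagonal.mem_antidiagonal.mp hpa
    refine Finset.mem_filter.mpr ⟨hps, fun j => ?_⟩
    have : p.1 j + p.2 j = 1 := by
      rw [← hu1 j, ← hadd]; rfl
    show p.1 j ≤ 1
    omega
  · intro d hd
    obtain ⟨hds, hdm⟩ := Finset.mem_filter.mp hd
    have hle : d ≤ u := by
      intro j
      rw [hu1 j]
      exact hdm j
    refine Finset.mem_filter.mpr ⟨Finset.HasAntidiagonal.mem_antidiagonal.mpr ?_, hds⟩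
    exact add_tsub_cancel_of_le hle
  · intro p hp
    obtain ⟨hpa, _⟩ := Finset.mem_filter.mp hp
    have hadd : p.1 + p.2 = u := Finset.HasAntidiagonal.mem_antidiagonal.mp hpa
    have : u - p.1 = p.2 := by
      rw [← hadd]; rw [add_comm]; exact add_tsub_cancel_right _ _
    show (p.1, u - p.1) = p
    rw [this]
  · intro d _
    rfl
  · intro p hp
    obtain ⟨hpa, hps⟩ := Finset.mem_filter.mp hp
    have hadd : p.1 + p.2 = u := Finset.HasAntidiagonal.mem_antidiagonal.mp hpa
    have hp2le : ∀ j, p.2 j ≤ 1 := by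
      intro j
      have : p.1 j + p.2 j = 1 := by rw [← hu1 j, ← hadd]; rfl
      omega
    have hp2sum : (∑ j, p.2 j) = n - m := by
      have h1 : (∑ j, (p.1 j + p.2 j)) = ∑ j, u j :=
        Finset.sum_congr rfl fun j _ => by rw [← hadd]; rfl
      rw [Finset.sum_add_distrib] at h1
      have h2 := hdeg p.1 hps
      omega
    rw [coeff_H_pow (n - m) p.2 hp2le hp2sum]
end

section
/- Let G = (V, E) be an undirected graph on n vertices, and for c ≥ 1 define polynomials p_{1,i} = x_i^c and p_{k+1,i} = x_i^c * (Σ_{(v_i,v_j)∈E} p_{k,j}), and p(G,k) = Σ_{i=1}^n p_{k,i}. Then G contains a walk v_{i_1}, v_{i_2}, ..., v_{i_k} of k vertices (consecutive vertices adjacent) with all vertices distinct if and only if the sum-product expansion of p(G,k) contains the monomial x_{i_1}^c ⋯ x_{i_k}^c on k distinct variables. -/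
open MvPolynomial

/-- `pwalk n c E k i` is the polynomial `p_{k+1,i}` of the paper:
`p_{1,i} = x_i ^ c` and `p_{k+1,i} = x_i ^ c * ∑_{(v_i,v_j) ∈ E} p_{k,j}`. -/
noncomputable def pwalk (n c : ℕ) (E : Fin n → Fin n → Prop) [DecidableRel E] :
    ℕ → Fin n → MvPolynomial (Fin n) ℤ
  | 0, i => X i ^ c
  | k + 1, i => X i ^ c * ∑ j ∈ Finset.univ.filter (fun j => E i j), pwalk n c E k j

/-- The finite set of walks on `k+1` vertices starting at `i`. -/
def walkSet (n : ℕ) (E : Fin n → Fin n → Prop) [DecidableRel E] (k : ℕ) (i : Fin n) :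
    Finset (Fin (k+1) → Fin n) :=
  Finset.univ.filter (fun w => w 0 = i ∧ ∀ j : Fin k, E (w j.castSucc) (w j.succ))

lemma pwalk_expand (n c : ℕ) (E : Fin n → Fin n → Prop) [DecidableRel E] :
    ∀ (k : ℕ) (i : Fin n), pwalk n c E k i
      = ∑ w ∈ walkSet n E k i, monomial (∑ j, Finsupp.single (w j) c) (1 : ℤ)
  | 0, i => by
    have h : walkSet n E 0 i = {fun _ => i} := by
      ext w
      simp [walkSet, funext_iff, Fin.forall_fin_one]
    rw [h]
    simp [pwalk, X_pow_eq_monomial]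
  | k+1, i => by
    rw [pwalk]
    simp_rw [pwalk_expand n c E k, Finset.mul_sum]
    rw [Finset.sum_sigma']
    refine Finset.sum_nbij' (fun x => Fin.cons i x.2) (fun w => ⟨w 1, fun j => w j.succ⟩)
      ?_ ?_ ?_ ?_ ?_
    · rintro ⟨j0, w⟩ hx
      simp only [Finset.mem_sigma, Finset.mem_filter, walkSet, Finset.mem_univ, true_and] at hx ⊢
      obtain ⟨hE, hw0, hadj⟩ := hx
      refine ⟨rfl, fun j => ?_⟩
      refine Fin.cases ?_ (fun l => ?_) j
      · simpa [hw0] using hE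
      · simpa using hadj l
    · intro w hw
      simp only [walkSet, Finset.mem_sigma, Finset.mem_filter, Finset.mem_univ, true_and] at hw ⊢
      obtain ⟨hw0, hadj⟩ := hw
      refine ⟨?_, rfl, fun l => ?_⟩
      · have := hadj 0
        simpa [hw0] using this
      · have := hadj l.succ
        simpa using this
    · rintro ⟨j0, w⟩ hx
      simp only [walkSet, Finset.mem_sigma, Finset.mem_filter, Finset.mem_univ, true_and] at hx
      ext
      · simp [hx.2.1]
      · simp
    · intro w hw
      simp only [walkSet, Finset.mem_filter, Finset.mem_univ, true_and] at hw
      ext j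
      refine Fin.cases ?_ (fun l => ?_) j <;> simp [hw.1]
    · rintro ⟨j0, w⟩ hx
      rw [X_pow_eq_monomial, monomial_mul, mul_one]
      congr 1
      conv_rhs => rw [Fin.sum_univ_succ]
      simp

lemma sum_single_S {n : ℕ} (c : ℕ) (S : Finset (Fin n)) (a : Fin n) :
    (∑ a' ∈ S, Finsupp.single a' c) a = if a ∈ S then c else 0 := by
  rw [Finset.sum_apply']
  simp [Finsupp.single_apply, Finset.sum_ite_eq]

lemma sum_single_w {n m : ℕ} (c : ℕ) (w : Fin m → Fin n) (a : Fin n) :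
    (∑ j, Finsupp.single (w j) c) a
      = (Finset.univ.filter (fun j => w j = a)).card * c := by
  rw [Finset.sum_apply']
  simp only [Finsupp.single_apply]
  rw [Finset.sum_ite, Finset.sum_const, Finset.sum_const_zero, add_zero, smul_eq_mul]

lemma exp_eq_iff {n m c : ℕ} (hc : 1 ≤ c) (w : Fin m → Fin n) (S : Finset (Fin n))
    (hS : S.card = m) :
    (∑ j, Finsupp.single (w j) c) = ∑ a ∈ S, Finsupp.single a c ↔
      Function.Injective w ∧ ∀ j, w j ∈ S := by
  constructor
  · intro heq
    have key : ∀ a, (Finset.univ.filter (fun j => w j = a)).card * c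
        = if a ∈ S then c else 0 := by
      intro a
      rw [← sum_single_w c w a, heq, sum_single_S]
    have hmem : ∀ j, w j ∈ S := by
      intro j
      by_contra hj
      have := key (w j)
      rw [if_neg hj, Nat.mul_eq_zero] at this
      rcases this with h | h
      · have : j ∈ Finset.univ.filter (fun j' => w j' = w j) := by simp
        rw [Finset.card_eq_zero.mp h] at this
        simp at this
      · omega
    refine ⟨?_, hmem⟩
    intro j1 j2 hj
    have hw := key (w j1)
    rw [if_pos (hmem j1)] at hw
    have hcard : (Finset.univ.filter (fun j' => w j' = w j1)).card = 1 := by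
      have h1c : (Finset.univ.filter (fun j' => w j' = w j1)).card * c = 1 * c := by
        rw [hw, one_mul]
      exact Nat.eq_of_mul_eq_mul_right (by omega) h1c
    obtain ⟨x, hx⟩ := Finset.card_eq_one.mp hcard
    have h1 : j1 ∈ Finset.univ.filter (fun j' => w j' = w j1) := by simp
    have h2 : j2 ∈ Finset.univ.filter (fun j' => w j' = w j1) := by simp [hj]
    rw [hx] at h1 h2
    simp at h1 h2
    rw [h1, h2]
  · rintro ⟨hinj, hmem⟩
    have himg : Finset.image w Finset.univ = S := by
      apply Finset.eq_of_subset_of_card_le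
      · intro a ha
        obtain ⟨j, _, rfl⟩ := Finset.mem_image.mp ha
        exact hmem j
      · rw [Finset.card_image_of_injective _ hinj, Finset.card_univ, Fintype.card_fin, hS]
    rw [← himg, Finset.sum_image (fun a _ b _ h => hinj h)]

/-- `G` contains a walk on `k` pairwise distinct vertices with vertex set `S`
(consecutive vertices adjacent) iff the sum-product expansion of
`p(G,k) = ∑ i, p_{k,i}` contains the monomial `∏_{a ∈ S} x_a ^ c`. -/
theorem kpath_iff_monomial (n c k : ℕ) (hc : 1 ≤ c) (hk : 1 ≤ k)
    (E : Fin n → Fin n → Prop) [DecidableRel E] (hsym : ∀ i j, E i j → E j i)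
    (S : Finset (Fin n)) (hS : S.card = k) :
    (∃ v : Fin k → Fin n, Function.Injective v ∧ (∀ j, v j ∈ S) ∧
        ∀ (j : ℕ) (hj : j + 1 < k),
          E (v ⟨j, Nat.lt_of_succ_lt hj⟩) (v ⟨j + 1, hj⟩)) ↔
      MvPolynomial.coeff (∑ a ∈ S, Finsupp.single a c)
        (∑ i : Fin n, pwalk n c E (k - 1) i) ≠ 0 := by
  obtain ⟨m, rfl⟩ := Nat.exists_eq_succ_of_ne_zero (Nat.one_le_iff_ne_zero.mp hk)
  simp only [Nat.succ_sub_one]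
  simp_rw [pwalk_expand n c E m, MvPolynomial.coeff_sum, coeff_monomial]
  have hS' : S.card = m + 1 := hS
  constructor
  · rintro ⟨v, hinj, hmem, hadj⟩
    have hvwalk : v ∈ walkSet n E m (v 0) := by
      simp only [walkSet, Finset.mem_filter, Finset.mem_univ, true_and]
      exact fun j => hadj j.1 (Nat.succ_lt_succ j.isLt)
    have hexp : (∑ j, Finsupp.single (v j) c) = ∑ a ∈ S, Finsupp.single a c :=
      (exp_eq_iff hc v S hS').mpr ⟨hinj, hmem⟩
    intro h0
    have hnonneg : ∀ i ∈ (Finset.univ : Finset (Fin n)),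
        (0:ℤ) ≤ ∑ w ∈ walkSet n E m i,
          if (∑ j, Finsupp.single (w j) c) = ∑ a ∈ S, Finsupp.single a c then 1 else 0 := by
      intro i _
      apply Finset.sum_nonneg
      intro w _
      split <;> norm_num
    have := (Finset.sum_eq_zero_iff_of_nonneg hnonneg).mp h0 (v 0) (Finset.mem_univ _)
    have hnonneg2 : ∀ w ∈ walkSet n E m (v 0),
        (0:ℤ) ≤ if (∑ j, Finsupp.single (w j) c) = ∑ a ∈ S, Finsupp.single a c then 1 else 0 := by
      intro w _
      split <;> norm_num
    have := (Finset.sum_eq_zero_iff_of_nonneg hnonneg2).mp this v hvwalk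
    rw [if_pos hexp] at this
    norm_num at this
  · intro h0
    by_contra h
    apply h0
    apply Finset.sum_eq_zero
    intro i _
    apply Finset.sum_eq_zero
    intro w hw
    rw [if_neg]
    intro heq
    obtain ⟨hinj, hmem⟩ := (exp_eq_iff hc w S hS').mp heq
    simp only [walkSet, Finset.mem_filter, Finset.mem_univ, true_and] at hw
    exact h ⟨w, hinj, hmem, fun j hj => hw.2 ⟨j, Nat.lt_of_succ_lt_succ hj⟩⟩
end

section
/- Let M_1, ..., M_k be pairwise disjoint finite sets each of size at most λ, sorted so |M_1| ≥ |M_2| ≥ ... ≥ |M_k|. Suppose π_1, ..., π_ℓ are sets with ℓ ≥ ⌈k/λ⌉ and |π_i| ≥ |M_{λ(i-1)+1}| for each i ≤ ⌈k/λ⌉ (interpreting |M_j| = 0 for j > k). Then Σ_{i=1}^ℓ |π_i| ≥ (Σ_{j=1}^k |M_j|) / λ. -/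
/-- Core counting inequality for the greedy λ-approximation: if `M_1 ⊇ … ⊇ M_k`
(in size) are pairwise disjoint finite sets of size at most `lam`, sorted
nonincreasingly, `ℓ ≥ ⌈k/lam⌉`, and `|π_i| ≥ |M_{lam·(i-1)+1}|` for each
`i ≤ ⌈k/lam⌉` (with `|M_j| = 0` for `j > k`), then
`∑_j |M_j| ≤ lam * ∑_i |π_i|`, i.e. `∑_i |π_i| ≥ (∑_j |M_j|)/lam`. -/
theorem greedy_counting_inequality {α : Type*} [DecidableEq α] (lam k ℓ : ℕ)
    (hlam : 1 ≤ lam)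
    (M : Fin k → Finset α)
    (hMdisj : ∀ j j', j ≠ j' → Disjoint (M j) (M j'))
    (hMsize : ∀ j, (M j).card ≤ lam)
    (hsorted : ∀ j j' : Fin k, j ≤ j' → (M j').card ≤ (M j).card)
    (π : Fin ℓ → Finset α)
    (hℓ : (k + lam - 1) / lam ≤ ℓ)
    (hπ : ∀ i : Fin ℓ, (i : ℕ) < (k + lam - 1) / lam →
      (if h : lam * (i : ℕ) < k then (M ⟨lam * (i : ℕ), h⟩).card else 0) ≤ (π i).card) :
    ∑ j, (M j).card ≤ lam * ∑ i, (π i).card := by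
  set q := (k + lam - 1) / lam with hq
  have hk : k ≤ lam * q := by
    have h1 := Nat.div_add_mod (k + lam - 1) lam
    rw [← hq] at h1
    have h2 := Nat.mod_lt (k + lam - 1) (show 0 < lam by omega)
    omega
  set F : ℕ → ℕ := fun j => if h : j < k then (M ⟨j, h⟩).card else 0 with hF
  set P : ℕ → ℕ := fun i => if h : i < ℓ then (π ⟨i, h⟩).card else 0 with hP
  have hFanti : ∀ a b : ℕ, a ≤ b → F b ≤ F a := by
    intro a b hab
    simp only [hF]
    split_ifs with hb ha ha
    · exact hsorted ⟨a, ha⟩ ⟨b, hb⟩ hab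
    · omega
    · exact Nat.zero_le _
    · exact le_refl 0
  have hsplit : ∀ n : ℕ, ∑ j ∈ Finset.range (lam * n), F j
      = ∑ i ∈ Finset.range n, ∑ r ∈ Finset.range lam, F (lam * i + r) := by
    intro n
    induction n with
    | zero => simp
    | succ n ih =>
      rw [Nat.mul_succ, Finset.sum_range_add, ih, Finset.sum_range_succ]
  have hM : ∑ j, (M j).card = ∑ j ∈ Finset.range k, F j := by
    rw [Finset.sum_range fun j => F j]
    apply Finset.sum_congr rfl
    intro j _
    simp [hF, j.isLt]
  have hπ' : ∑ i, (π i).card = ∑ i ∈ Finset.range ℓ, P i := by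
    rw [Finset.sum_range fun i => P i]
    apply Finset.sum_congr rfl
    intro i _
    simp [hP, i.isLt]
  rw [hM, hπ']
  calc ∑ j ∈ Finset.range k, F j
      ≤ ∑ j ∈ Finset.range (lam * q), F j :=
        Finset.sum_le_sum_of_subset (Finset.range_subset_range.2 hk)
    _ = ∑ i ∈ Finset.range q, ∑ r ∈ Finset.range lam, F (lam * i + r) := hsplit q
    _ ≤ ∑ i ∈ Finset.range q, lam * P i := by
        apply Finset.sum_le_sum
        intro i hi
        have hiq : i < q := Finset.mem_range.1 hi
        have hiℓ : i < ℓ := lt_of_lt_of_le hiq hℓ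
        have hb := hπ ⟨i, hiℓ⟩ hiq
        have hFP : F (lam * i) ≤ P i := by
          simpa [hF, hP, hiℓ] using hb
        calc ∑ r ∈ Finset.range lam, F (lam * i + r)
            ≤ ∑ r ∈ Finset.range lam, F (lam * i) :=
              Finset.sum_le_sum fun r _ => hFanti _ _ (Nat.le_add_right _ _)
          _ = lam * F (lam * i) := by rw [Finset.sum_const, Finset.card_range, smul_eq_mul]
          _ ≤ lam * P i := Nat.mul_le_mul_left _ hFP
    _ ≤ ∑ i ∈ Finset.range ℓ, lam * P i :=
        Finset.sum_le_sum_of_subset (Finset.range_subset_range.2 hℓ)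
    _ = lam * ∑ i ∈ Finset.range ℓ, P i := (Finset.mul_sum _ _ _).symm
end

section
/- Let G = (V, E) be an undirected graph on n vertices. For each edge (v_i,v_j) introduce a variable x_{ij}, and for each vertex v_i define the term T(v_i) as the product of x_{ij} over edges incident to v_i, padded with fresh variables y_{i1},...,y_{i,n-1-d(v_i)} so that every T(v_i) has degree exactly n-1. Then for any subset S ⊆ V, the product ∏_{v ∈ S} T(v) is a squarefree (multilinear) monomial if and only if S is an independent set in G. -/
/-- In the reduction from maximum independent set: each vertex `i` gets the term
`T(v_i)` consisting of the edge variables `x_{ij}` of edges incident to `i`, padded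
with fresh variables `y_{i,0},…,y_{i,n-2-d(i)}` to degree exactly `n-1`.  For any
vertex set `S`, the product `∏_{v ∈ S} T(v)` is a squarefree (multilinear) monomial
iff `S` is an independent set of `G`. -/
theorem squarefree_product_iff_independent (n : ℕ) (G : SimpleGraph (Fin n))
    [DecidableRel G.Adj] (S : Finset (Fin n)) :
    let T : Fin n → Finset (Sym2 (Fin n) ⊕ (Fin n × ℕ)) := fun i =>
      ((G.neighborFinset i).image fun j => Sum.inl s(i, j)) ∪
        ((Finset.range (n - 1 - G.degree i)).image fun j => Sum.inr (i, j))
    (∀ v, (∑ i ∈ S, ∑ x ∈ T i, Finsupp.single x 1) v ≤ 1) ↔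
      ∀ i ∈ S, ∀ j ∈ S, i ≠ j → ¬ G.Adj i j := by
  intro T
  have hval : ∀ v, (∑ i ∈ S, ∑ x ∈ T i, Finsupp.single x 1) v
      = ∑ i ∈ S, (if v ∈ T i then 1 else 0) := by
    intro v
    rw [Finset.sum_apply']
    refine Finset.sum_congr rfl fun i _ => ?_
    rw [Finset.sum_apply']
    simp [Finsupp.single_apply, Finset.sum_ite_eq' (T i) v (fun _ => (1 : ℕ))]
  constructor
  · intro h i hi j hj hij hadj
    have hv := h (Sum.inl s(i, j))
    rw [hval] at hv
    have h2 : 2 ≤ ∑ k ∈ S, (if Sum.inl s(i, j) ∈ T k then (1:ℕ) else 0) := by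
      have : ({i, j} : Finset (Fin n)) ⊆ S := by
        intro x hx; simp at hx; rcases hx with rfl | rfl <;> assumption
      calc (2:ℕ) = ∑ k ∈ ({i, j} : Finset (Fin n)),
            (if Sum.inl s(i, j) ∈ T k then (1:ℕ) else 0) := by
            rw [Finset.sum_pair hij]
            have h1 : Sum.inl s(i, j) ∈ T i := by
              simp only [T, Finset.mem_union, Finset.mem_image]
              left
              exact ⟨j, by simpa using hadj, rfl⟩
            have h2 : Sum.inl s(i, j) ∈ T j := by
              simp only [T, Finset.mem_union, Finset.mem_image]
              left
              exact ⟨i, by simpa using hadj.symm, by rw [Sym2.eq_swap]⟩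
            rw [if_pos h1, if_pos h2]
        _ ≤ _ := Finset.sum_le_sum_of_subset_of_nonneg this (fun _ _ _ => by positivity)
    omega
  · intro hind v
    rw [hval]
    have : ∑ i ∈ S, (if v ∈ T i then (1:ℕ) else 0) = (S.filter (fun i => v ∈ T i)).card := by
      rw [Finset.card_filter]
    rw [this]
    apply Finset.card_le_one.mpr
    intro a ha b hb
    simp only [Finset.mem_filter] at ha hb
    obtain ⟨haS, hav⟩ := ha
    obtain ⟨hbS, hbv⟩ := hb
    by_contra hab
    -- v ∈ T a and v ∈ T b, a ≠ b
    simp only [T, Finset.mem_union, Finset.mem_image, Finset.mem_range,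
      SimpleGraph.mem_neighborFinset] at hav hbv
    rcases hav with ⟨ja, hja, heqa⟩ | ⟨ka, _, heqa⟩
    · rcases hbv with ⟨jb, hjb, heqb⟩ | ⟨kb, _, heqb⟩
      · rw [← heqb] at heqa
        have := Sym2.eq_iff.mp (Sum.inl.inj heqa)
        rcases this with ⟨rfl, rfl⟩ | ⟨rfl, rfl⟩
        · exact hab rfl
        · exact hind a haS _ hbS hab hja
      · rw [← heqb] at heqa; exact Sum.inl_ne_inr heqa
    · rcases hbv with ⟨jb, hjb, heqb⟩ | ⟨kb, _, heqb⟩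
      · rw [← heqb] at heqa; exact Sum.inr_ne_inl heqa
      · rw [← heqb] at heqa
        have := (Prod.mk.injEq ..).mp (Sum.inr.inj heqa)
        exact hab this.1
end

section
/- Let F be a polynomial over ℤ in variables x_1,...,x_n that is a product of clauses, where 2m ≤ n and every monomial of F has degree exactly 2m. Let H = x_1 + ... + x_n and F' = F · H^{n-2m}. Then the only multilinear monomial of degree n that can appear in F' is ψ = x_1 x_2 ⋯ x_n, and its coefficient in F' equals S(F) · (n-2m)!, where S(F) is the sum of coefficients of all multilinear monomials of F. In particular, F has a multilinear monomial with positive coefficient if and only if the coefficient of ψ in F' is positive. -/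
open MvPolynomial

lemma sq_coeff (n k : ℕ) (e : Fin n →₀ ℕ) (he : ∀ j, e j ≤ 1) :
    MvPolynomial.coeff e ((∑ j : Fin n, (X j : MvPolynomial (Fin n) ℤ)) ^ k)
      = if (∑ j : Fin n, e j) = k then (k.factorial : ℤ) else 0 := by
  induction k generalizing e with
  | zero =>
    rw [pow_zero, MvPolynomial.coeff_one]
    by_cases h : e = 0
    · simp [h]
    · rw [if_neg (fun h0 => h h0.symm), if_neg]
      intro hs
      exact h (Finsupp.ext fun j => Finset.sum_eq_zero_iff.mp hs j (Finset.mem_univ j))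
  | succ k ih =>
    rw [pow_succ, Finset.mul_sum, MvPolynomial.coeff_sum]
    simp_rw [MvPolynomial.coeff_mul_X']
    rw [Finset.sum_ite_mem, Finset.univ_inter]
    have key : ∀ j ∈ e.support,
        MvPolynomial.coeff (e - Finsupp.single j 1)
            ((∑ j : Fin n, (X j : MvPolynomial (Fin n) ℤ)) ^ k)
          = if (∑ i : Fin n, e i) - 1 = k then (k.factorial : ℤ) else 0 := by
      intro j hj
      have hj1 : 1 ≤ e j := Nat.one_le_iff_ne_zero.mpr (Finsupp.mem_support_iff.mp hj)
      have hle : ∀ i, Finsupp.single j 1 i ≤ e i := by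
        intro i
        rcases eq_or_ne i j with rfl | hij
        · simpa using hj1
        · simp [Finsupp.single_apply, Ne.symm hij]
      rw [ih _ (fun i => le_trans (by rw [Finsupp.tsub_apply]; exact Nat.sub_le _ _) (he i))]
      congr 1
      simp_rw [Finsupp.tsub_apply]
      rw [Finset.sum_tsub_distrib _ (fun i _ => hle i)]
      simp [Finsupp.single_apply]
    rw [Finset.sum_congr rfl key, Finset.sum_const]
    have hcard : e.support.card = ∑ j : Fin n, e j := by
      rw [← Finset.sum_subset (Finset.subset_univ e.support)
        (fun x _ hx => Finsupp.notMem_support_iff.mp hx)]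
      rw [Finset.card_eq_sum_ones]
      exact Finset.sum_congr rfl fun j hj => (Nat.le_antisymm
        (Nat.one_le_iff_ne_zero.mpr (Finsupp.mem_support_iff.mp hj)) (he j))
    rw [hcard]
    set S := ∑ j : Fin n, e j with hS
    by_cases h : S = k + 1
    · rw [h, if_pos rfl, if_pos (by omega)]
      simp [Nat.factorial_succ, mul_comm]
    · rw [if_neg h]
      rcases Nat.eq_zero_or_pos S with h0 | h0
      · simp [h0]
      · rw [if_neg (by omega)]
        simp

lemma finsupp_sum_eq_univ_sum (n : ℕ) (d : Fin n →₀ ℕ) :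
    (d.sum fun _ e => e) = ∑ j : Fin n, d j := by
  rw [Finsupp.sum_fintype]
  intro i; rfl


/-- Let `F` be a polynomial over `ℤ` in `n` variables with nonnegative coefficients
all of whose monomials have degree exactly `2m`, with `2m ≤ n`, and let
`F' = F * H^(n-2m)` with `H = x_1 + ⋯ + x_n`.  Then the only multilinear monomial
appearing in `F'` is `ψ = x_1 ⋯ x_n`, its coefficient is `S(F) * (n-2m)!` where
`S(F)` is the sum of the coefficients of the multilinear monomials of `F`, and `F`
has a multilinear monomial with positive coefficient iff the coefficient of `ψ`
in `F'` is positive. -/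
theorem amplification_to_full_monomial (n m : ℕ) (hmn : 2 * m ≤ n)
    (F : MvPolynomial (Fin n) ℤ)
    (hpos : ∀ d, 0 ≤ MvPolynomial.coeff d F)
    (hdeg : ∀ d ∈ F.support, (d.sum fun _ e => e) = 2 * m) :
    let H : MvPolynomial (Fin n) ℤ := ∑ j : Fin n, X j
    let F' : MvPolynomial (Fin n) ℤ := F * H ^ (n - 2 * m)
    let ψ : Fin n →₀ ℕ := ∑ j : Fin n, Finsupp.single j 1
    (∀ d : Fin n →₀ ℕ, MvPolynomial.coeff d F' ≠ 0 → (∀ j, d j ≤ 1) → d = ψ) ∧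
    MvPolynomial.coeff ψ F'
      = (∑ d ∈ F.support.filter (fun d => ∀ j, d j ≤ 1), MvPolynomial.coeff d F)
          * ((n - 2 * m).factorial : ℤ) ∧
    ((∃ d : Fin n →₀ ℕ, (∀ j, d j ≤ 1) ∧ 0 < MvPolynomial.coeff d F) ↔
      0 < MvPolynomial.coeff ψ F') := by
  intro H F' ψ
  set k := n - 2 * m with hk
  have hψ : ∀ j, ψ j = 1 := by
    intro j
    simp only [ψ, Finsupp.finset_sum_apply, Finsupp.single_apply]
    rw [Finset.sum_ite_eq' Finset.univ j (fun _ => 1)]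
    simp
  -- homogeneity of F'
  have hF : F.IsHomogeneous (2 * m) := by
    intro d hd
    show Finsupp.weight (fun _ => 1) d = _
    rw [← Finsupp.degree_eq_weight_one (R := ℕ)]
    exact hdeg d (MvPolynomial.mem_support_iff.mpr hd)
  have hH : H.IsHomogeneous 1 :=
    IsHomogeneous.sum _ _ _ fun j _ => isHomogeneous_X _ _
  have hF' : F'.IsHomogeneous n := by
    have := hF.mul (hH.pow k)
    rwa [show 2 * m + 1 * k = n by omega] at this
  -- Part 1
  have part1 : ∀ d : Fin n →₀ ℕ, MvPolynomial.coeff d F' ≠ 0 → (∀ j, d j ≤ 1) → d = ψ := by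
    intro d hd hml
    have hdn : d.degree = n := by
      by_contra h
      exact hd (hF'.coeff_eq_zero h)
    have hsum : ∑ j : Fin n, d j = n := by
      rw [← finsupp_sum_eq_univ_sum]
      exact hdn
    have h1 : ∀ j ∈ Finset.univ, d j = (1 : ℕ) := by
      rw [← Finset.sum_eq_sum_iff_of_le (fun j _ => hml j)]
      simpa using hsum
    ext j
    rw [h1 j (Finset.mem_univ j), hψ j]
  -- Part 2 : the coefficient computation
  have part2 : MvPolynomial.coeff ψ F'
      = (∑ d ∈ F.support.filter (fun d => ∀ j, d j ≤ 1), MvPolynomial.coeff d F)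
          * (k.factorial : ℤ) := by
    have expand : F' = ∑ d ∈ F.support, MvPolynomial.monomial d (MvPolynomial.coeff d F) * H ^ k := by
      rw [← Finset.sum_mul, ← MvPolynomial.as_sum F]
    rw [expand, MvPolynomial.coeff_sum]
    have step : ∀ d ∈ F.support,
        MvPolynomial.coeff ψ (MvPolynomial.monomial d (MvPolynomial.coeff d F) * H ^ k)
          = if (∀ j, d j ≤ 1) then MvPolynomial.coeff d F * (k.factorial : ℤ) else 0 := by
      intro d hd
      rw [MvPolynomial.coeff_monomial_mul']
      have hdd : ∑ j : Fin n, d j = 2 * m := by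
        rw [← finsupp_sum_eq_univ_sum]; exact hdeg d hd
      by_cases hml : ∀ j, d j ≤ 1
      · rw [if_pos (by intro j; rw [hψ j]; exact hml j), if_pos hml]
        congr 1
        have hsub : ∀ j, (ψ - d) j ≤ 1 := by
          intro j
          rw [Finsupp.tsub_apply, hψ j]
          exact Nat.sub_le _ _
        rw [sq_coeff n k _ hsub, if_pos]
        simp_rw [Finsupp.tsub_apply]
        rw [Finset.sum_tsub_distrib _ (fun j _ => by rw [hψ j]; exact hml j), hdd]
        have : ∑ j : Fin n, ψ j = n := by simp [hψ]
        rw [this]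
      · rw [if_neg hml, if_neg]
        intro hle
        exact hml fun j => le_trans (hle j) (le_of_eq (hψ j))
    rw [Finset.sum_congr rfl step, Finset.sum_ite, Finset.sum_const_zero, add_zero,
      ← Finset.sum_mul]
  refine ⟨part1, part2, ?_⟩
  -- Part 3
  constructor
  · rintro ⟨d, hml, hdpos⟩
    rw [part2]
    have hd : d ∈ F.support.filter (fun d => ∀ j, d j ≤ 1) :=
      Finset.mem_filter.mpr ⟨MvPolynomial.mem_support_iff.mpr (ne_of_gt hdpos), hml⟩
    have hsum : 0 < ∑ d ∈ F.support.filter (fun d => ∀ j, d j ≤ 1), MvPolynomial.coeff d F :=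
      Finset.sum_pos' (fun d _ => hpos d) ⟨d, hd, hdpos⟩
    exact mul_pos hsum (by exact_mod_cast k.factorial_pos)
  · intro h
    rw [part2] at h
    have hsum : 0 < ∑ d ∈ F.support.filter (fun d => ∀ j, d j ≤ 1), MvPolynomial.coeff d F := by
      by_contra hc
      push_neg at hc
      have : (∑ d ∈ F.support.filter (fun d => ∀ j, d j ≤ 1), MvPolynomial.coeff d F)
          * (k.factorial : ℤ) ≤ 0 :=
        mul_nonpos_of_nonpos_of_nonneg hc (by positivity)
      omega
    obtain ⟨d, hd, hdne⟩ := Finset.exists_ne_zero_of_sum_ne_zero (ne_of_gt hsum)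
    exact ⟨d, (Finset.mem_filter.mp hd).2, lt_of_le_of_ne (hpos d) (Ne.symm hdne)⟩
end
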